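/- Let 𝔾 be an ordered graph with r-admissibility at most p ≥ 2, and fix a connected graph H with |V(H)| ≤ r. For every vertex v of 𝔾, any family of pairwise non-similar useful pairs (G*, U*) with v = max U* (maximum under the order) has size at most p^{3r²·log r}. More precisely, the number of choices for U* is at most C(p(p−1)^{r−1}, |V(H)|−1) ≤ p^{2r|V(H)|}, and the number of ordered isomorphism types of induced subgraphs of H is at most 2^{2|V(H)| log |V(H)|}. -/

import Mathlib

open SimpleGraph

variable {V W : Type*}

/-- `J` is an `H`-subgraph of `G`: a subgraph of `G` isomorphic to `H`. -/
def IsHSub (G : SimpleGraph V) (H : SimpleGraph W) (J : G.Subgraph) : Prop :=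
  ∃ f : W → V, Function.Injective f ∧ Set.range f = J.verts ∧
    ∀ a b : W, H.Adj a b ↔ J.Adj (f a) (f b)

/-- `D` is a prefix of the induced ordered subgraph of `J` on the vertex set `A`. -/
def IsPrefixOf [LinearOrder V] {G : SimpleGraph V} (J : G.Subgraph) (A D : Set V) : Prop :=
  D.Nonempty ∧ D ⊆ A ∧
    (∀ u ∈ D, ∃ v ∈ A \ D, J.Adj u v) ∧
    (∀ u ∈ D, ∀ v ∈ A \ D, u < v) ∧
    (∀ v ∈ A, (∃ x ∈ J.verts \ A, J.Adj v x) → v ∈ D)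

/-- `(A, D)` is a useful pair in the `H`-subgraph `J`: `A` induces an ordered subgraph
of `J`, `D` is a prefix of it, and `J[A ∖ D]` is connected. -/
def IsUsefulPair [LinearOrder V] {G : SimpleGraph V} (J : G.Subgraph) (A D : Set V) : Prop :=
  A ⊆ J.verts ∧ IsPrefixOf J A D ∧ (J.induce (A \ D)).Connected

/-- The spine of `U` in `J`: all useful pairs `(A, D)` with `A ∩ U = D`. -/
def Spine [LinearOrder V] {G : SimpleGraph V} (J : G.Subgraph) (U : Set V) :
    Set (Set V × Set V) :=
  {P | IsUsefulPair J P.1 P.2 ∧ P.1 ∩ U = P.2}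

/-- `U` is `J`-stable: every vertex of `J` outside `U` lies in `A ∖ D` for some
member `(A, D)` of the spine of `U`. -/
def IsStable [LinearOrder V] {G : SimpleGraph V} (J : G.Subgraph) (U : Set V) : Prop :=
  ∀ w ∈ J.verts \ U, ∃ P ∈ Spine J U, w ∈ P.1 \ P.2

/-- An `(r,𝔾)`-admissible path packing rooted at `v`. -/
def IsAdmPacking [LinearOrder V] (G : SimpleGraph V) (r : ℕ) (v : V) {t : ℕ}
    (F : Fin t → Σ x : V, G.Walk v x) : Prop :=
  (∀ i, ((F i).2).IsPath ∧ (F i).2.length ≤ r ∧ (F i).1 < v ∧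
      ∀ y ∈ (F i).2.support, y ≠ v → y ≠ (F i).1 → v < y) ∧
  ∀ i j, i ≠ j → ∀ y, y ∈ (F i).2.support → y ∈ (F j).2.support → y = v

/-- The `r`-admissibility of the ordered graph `(G, ≤)` is at most `p`. -/
def AdmAtMost [LinearOrder V] (G : SimpleGraph V) (p r : ℕ) : Prop :=
  ∀ (v : V) (t : ℕ) (F : Fin t → Σ x : V, G.Walk v x), IsAdmPacking G r v F → t ≤ p

/-- A useful pair in the ordered graph `G`: an induced ordered subgraph (on vertex set `A`)
of some `H`-subgraph `J` of `G`, together with a prefix `D`. -/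
structure UPair [LinearOrder V] (G : SimpleGraph V) (H : SimpleGraph W) where
  J : G.Subgraph
  A : Set V
  D : Set V
  isHSub : IsHSub G H J
  isUseful : IsUsefulPair J A D

/-- The edges of a useful pair. -/
def UPair.edges [LinearOrder V] {G : SimpleGraph V} {H : SimpleGraph W} (P : UPair G H) :
    Set (Sym2 V) :=
  {e | ∃ a ∈ P.A, ∃ b ∈ P.A, P.J.Adj a b ∧ e = s(a, b)}

/-- Two useful pairs are similar: same prefix, and there is an order-isomorphism between
them mapping prefix to prefix. -/
def UPairSimilar [LinearOrder V] {G : SimpleGraph V} {H : SimpleGraph W}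
    (P Q : UPair G H) : Prop :=
  P.D = Q.D ∧ ∃ f : V → V, Set.BijOn f P.A Q.A ∧ f '' P.D = Q.D ∧
    (∀ a ∈ P.A, ∀ b ∈ P.A, (P.J.Adj a b ↔ Q.J.Adj (f a) (f b))) ∧
    (∀ a ∈ P.A, ∀ b ∈ P.A, (a < b ↔ f a < f b))

/-- A strata: a family of pairwise similar useful pairs, all with prefix `U`, such that
any two distinct members share only edges between vertices of `U`. -/
def IsStrata [LinearOrder V] {G : SimpleGraph V} {H : SimpleGraph W}
    (𝓜 : Set (UPair G H)) (U : Set V) : Prop :=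
  (∀ P ∈ 𝓜, P.D = U) ∧
  (∀ P ∈ 𝓜, ∀ Q ∈ 𝓜, UPairSimilar P Q) ∧
  (∀ P ∈ 𝓜, ∀ Q ∈ 𝓜, P ≠ Q →
    ∀ e ∈ P.edges ∩ Q.edges, ∀ a ∈ e, a ∈ U)

/-- `v` is the nadir of the useful pair `P`: the minimum of `A ∖ D` in the order. -/
def IsNadir [LinearOrder V] {G : SimpleGraph V} {H : SimpleGraph W}
    (P : UPair G H) (v : V) : Prop :=
  v ∈ P.A \ P.D ∧ ∀ u ∈ P.A \ P.D, v ≤ u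

/-- The set of nadirs of a family of useful pairs. -/
def nadirs [LinearOrder V] {G : SimpleGraph V} {H : SimpleGraph W}
    (𝓜 : Set (UPair G H)) : Set V :=
  {v | ∃ P ∈ 𝓜, IsNadir P v}


/-- vertices `u < v` reachable from `x` by a path of length at most `k` whose
internal vertices are all above `v`. -/
def RRset [LinearOrder V] (G : SimpleGraph V) (x v : V) (k : ℕ) : Set V :=
  {u | u < v ∧ ∃ w : G.Walk x u, w.IsPath ∧ w.length ≤ k ∧
    ∀ y ∈ w.support, y ≠ x → y ≠ u → v < y}



/-- vertices `u < v` reachable from `x` by a path of length ≤ k whose internal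
vertices are all `> v`. -/
lemma walk_split {G : SimpleGraph V} (Pr : V → Prop) :
    ∀ {x u : V} (w : G.Walk x u), w.IsPath → ¬ Pr x → Pr u →
    ∃ (q : V) (w₁ : G.Walk x q) (w₂ : G.Walk q u), Pr q ∧
      w₁.IsPath ∧ w₂.IsPath ∧ 1 ≤ w₁.length ∧ w₁.append w₂ = w ∧
      (∀ y ∈ w₁.support, y ≠ q → ¬ Pr y) := by
  intro x u w
  induction w with
  | nil => intro _ hx hu; exact absurd hu hx
  | @cons a b c h w ih =>
    intro hp hx hu
    by_cases hb : Pr b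
    · refine ⟨b, .cons h .nil, w, hb, ?_, hp.of_cons, by simp, by simp, ?_⟩
      · simp [Walk.isPath_def, h.ne]
      · intro y hy hyb
        simp only [Walk.support_cons, Walk.support_nil, List.mem_cons, List.mem_singleton] at hy
        rcases hy with rfl | hy
        · exact hx
        · simp at hy; exact absurd hy hyb
    · obtain ⟨q, w₁, w₂, hq, h1, h2, h3, h4, h5⟩ := ih hp.of_cons hb hu
      refine ⟨q, .cons h w₁, w₂, hq, ?_, h2, by simp, by rw [Walk.cons_append, h4], ?_⟩
      · rw [Walk.cons_isPath_iff]
        refine ⟨h1, fun ha => ?_⟩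
        have : a ∈ (w₁.append w₂).support := by
          rw [Walk.support_append]; exact List.mem_append_left _ ha
        rw [h4] at this
        exact ((Walk.cons_isPath_iff _ _).1 hp).2 this
      · intro y hy hyq
        rw [Walk.support_cons, List.mem_cons] at hy
        rcases hy with rfl | hy
        · exact hx
        · exact h5 y hy hyq


lemma ncard_biUnion_le' {α β : Type*} (I : Finset α) (S : α → Set β)
    (hfin : ∀ a ∈ I, (S a).Finite) :
    (⋃ x ∈ I, S x).ncard ≤ ∑ x ∈ I, (S x).ncard := by
  classical
  induction I using Finset.induction with
  | empty => simp
  | @insert a I ha ih =>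
    rw [Finset.set_biUnion_insert, Finset.sum_insert ha]
    exact le_trans (Set.ncard_union_le _ _)
      (by gcongr; exact ih (fun a ha => hfin a (by simp [ha])))

lemma SR_step [LinearOrder V] {G : SimpleGraph V} {p r : ℕ} (hadm : AdmAtMost G p r)
    (hfin : ∀ z v k, (RRset G z v k).Finite)
    (v : V) (k : ℕ) (hk1 : 1 ≤ k) (hkr : k ≤ r) (M : ℕ)
    (hM : ∀ z, v < z → (RRset G z v (k-1)).ncard ≤ M) :
    (RRset G v v k).ncard ≤ p + p * (k-1) * M := by
  classical
  set T := (Σ u : V, G.Walk v u) with hT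
  set wit : T → Prop := fun f => f.1 < v ∧ f.2.IsPath ∧ f.2.length ≤ k ∧
    ∀ y ∈ f.2.support, y ≠ v → y ≠ f.1 → v < y with hwit
  set Pk : Finset T → Prop := fun F => (∀ f ∈ F, wit f) ∧
    (∀ f ∈ F, ∀ g ∈ F, f ≠ g → ∀ y ∈ f.2.support, y ∈ g.2.support → y = v) with hPk
  have hcard : ∀ F : Finset T, Pk F → F.card ≤ p := by
    intro F hF
    refine hadm v F.card (fun i => (F.equivFin.symm i : T)) ⟨?_, ?_⟩
    · intro i
      obtain ⟨h1, h2, h3, h4⟩ := hF.1 _ (F.equivFin.symm i).2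
      exact ⟨h2, le_trans h3 hkr, h1, h4⟩
    · intro i j hij y hyi hyj
      refine hF.2 _ (F.equivFin.symm i).2 _ (F.equivFin.symm j).2 ?_ y hyi hyj
      intro hc
      exact hij (F.equivFin.symm.injective (Subtype.ext hc))
  have hne : ∃ n, ∃ F : Finset T, Pk F ∧ F.card = n := ⟨0, ∅, ⟨by simp, by simp⟩, rfl⟩
  have hbdd : BddAbove {n | ∃ F : Finset T, Pk F ∧ F.card = n} := by
    refine ⟨p, fun n hn => ?_⟩
    obtain ⟨F, hF, rfl⟩ := hn
    exact hcard F hF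
  obtain ⟨F, hF, hFcard⟩ := Nat.sSup_mem hne hbdd
  have hmax : ∀ F' : Finset T, Pk F' → F'.card ≤ F.card := by
    intro F' h'
    rw [hFcard]
    exact le_csSup hbdd ⟨F', h', rfl⟩
  set ends : Finset V := F.image (fun f => f.1) with hends
  set I : Finset V := F.biUnion (fun f =>
    (f.2.support.toFinset.filter (fun y => y ≠ v ∧ y ≠ f.1))) with hI
  have hper : ∀ f ∈ F, (f.2.support.toFinset.filter (fun y => y ≠ v ∧ y ≠ f.1)).card ≤ k - 1 := by
    intro f hf
    obtain ⟨h1, h2, h3, h4⟩ := hF.1 _ hf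
    have hnodup := h2.support_nodup
    have hsub : (f.2.support.toFinset.filter (fun y => y ≠ v ∧ y ≠ f.1)) ⊆
        f.2.support.toFinset \ {v, f.1} := by
      intro y hy
      simp only [Finset.mem_filter, Finset.mem_sdiff, Finset.mem_insert,
        Finset.mem_singleton] at hy ⊢
      exact ⟨hy.1, by tauto⟩
    refine le_trans (Finset.card_le_card hsub) ?_
    have hsub2 : ({v, f.1} : Finset V) ⊆ f.2.support.toFinset := by
      intro y hy
      simp only [Finset.mem_insert, Finset.mem_singleton] at hy
      rcases hy with rfl | rfl
      · simp [Walk.start_mem_support]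
      · simp [Walk.end_mem_support]
    rw [Finset.card_sdiff_of_subset hsub2]
    have hc2 : ({v, f.1} : Finset V).card = 2 := by
      rw [Finset.card_insert_of_notMem (by simp [h1.ne']), Finset.card_singleton]
    rw [hc2, List.card_toFinset, hnodup.dedup, Walk.length_support]
    omega
  have hIcard : I.card ≤ F.card * (k-1) := by
    refine le_trans Finset.card_biUnion_le ?_
    refine le_trans (Finset.sum_le_sum hper) ?_
    rw [Finset.sum_const, smul_eq_mul]
  have hsub : RRset G v v k ⊆ (↑ends : Set V) ∪ ⋃ z ∈ I, RRset G z v (k-1) := by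
    intro u hu
    obtain ⟨huv, w, hw1, hw2, hw3⟩ := hu
    by_cases hue : u ∈ ends
    · exact Or.inl hue
    have hwit0 : wit ⟨u, w⟩ := ⟨huv, hw1, hw2, hw3⟩
    have hint : ∃ g ∈ F, ∃ y, y ∈ w.support ∧ y ∈ g.2.support ∧ y ≠ v := by
      by_contra hc
      push_neg at hc
      have hnotmem : (⟨u, w⟩ : T) ∉ F := by
        intro hmem
        exact hue (Finset.mem_image.2 ⟨_, hmem, rfl⟩)
      have hPk' : Pk (insert ⟨u, w⟩ F) := by
        constructor
        · intro f hf
          rcases Finset.mem_insert.1 hf with rfl | hf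
          · exact hwit0
          · exact hF.1 f hf
        · intro f hf g hg hfg y hyf hyg
          rcases Finset.mem_insert.1 hf with rfl | hf <;>
            rcases Finset.mem_insert.1 hg with rfl | hg
          · exact absurd rfl hfg
          · by_contra hyv
            exact hyv (hc g hg y hyf hyg)
          · by_contra hyv
            exact hyv (hc f hf y hyg hyf)
          · exact hF.2 f hf g hg hfg y hyf hyg
      have := hmax _ hPk'
      rw [Finset.card_insert_of_notMem hnotmem] at this
      omega
    obtain ⟨g, hg, y, hyw, hyg, hyv⟩ := hint
    have hgwit := hF.1 g hg
    have hyu : y ≠ u := by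
      rintro rfl
      rcases eq_or_ne y g.1 with h | hne
      · exact hue (Finset.mem_image.2 ⟨_, hg, h ▸ rfl⟩)
      · exact absurd (hgwit.2.2.2 y hyg hyv hne) (asymm huv)
    have hygt : v < y := hw3 y hyw hyv hyu
    have hyI : y ∈ I := by
      refine Finset.mem_biUnion.2 ⟨g, hg, ?_⟩
      simp only [Finset.mem_filter, List.mem_toFinset]
      exact ⟨hyg, hyv, fun h => absurd (h ▸ hygt) (asymm (h ▸ hgwit.1))⟩
    refine Or.inr (Set.mem_biUnion hyI ?_)
    refine ⟨huv, w.dropUntil y hyw, hw1.dropUntil hyw, ?_, ?_⟩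
    · have hlen : (w.takeUntil y hyw).length + (w.dropUntil y hyw).length = w.length := by
        rw [← Walk.length_append, w.take_spec hyw]
      have h1 : (w.takeUntil y hyw).length ≠ 0 := by
        intro h
        exact hyv (Walk.eq_of_length_eq_zero h).symm
      omega
    · intro z hz hzy hzu
      have hzw : z ∈ w.support := Walk.support_dropUntil_subset w hyw hz
      rcases eq_or_ne z v with rfl | hzv
      · exfalso
        have hz' := hz
        rw [Walk.support_eq_cons] at hz'
        rcases List.mem_cons.1 hz' with h | h
        · exact hygt.ne' h.symm
        · have hvtake : z ∈ (w.takeUntil y hyw).support := Walk.start_mem_support _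
          have hsupp : w.support =
              (w.takeUntil y hyw).support ++ (w.dropUntil y hyw).support.tail := by
            rw [← Walk.support_append, w.take_spec hyw]
          have hnodup := hw1.support_nodup
          rw [hsupp] at hnodup
          exact (List.disjoint_of_nodup_append hnodup) hvtake h
      · exact hw3 z hzw hzv hzu
  calc (RRset G v v k).ncard
      ≤ ((↑ends : Set V) ∪ ⋃ z ∈ I, RRset G z v (k-1)).ncard := by
        refine Set.ncard_le_ncard hsub ?_
        exact Set.Finite.union (Finset.finite_toSet _)
          (Set.Finite.biUnion (Finset.finite_toSet I) (fun i _ => hfin i v (k-1)))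
    _ ≤ (↑ends : Set V).ncard + (⋃ z ∈ I, RRset G z v (k-1)).ncard := Set.ncard_union_le _ _
    _ ≤ p + p * (k-1) * M := by
        have h1 : (↑ends : Set V).ncard ≤ p := by
          rw [Set.ncard_coe_finset]
          exact le_trans Finset.card_image_le (hcard F hF)
        have h2 : (⋃ z ∈ I, RRset G z v (k-1)).ncard ≤ p * (k-1) * M := by
          refine le_trans (ncard_biUnion_le' I _ (fun a _ => hfin a v (k-1))) ?_
          have hall : ∀ z ∈ I, (RRset G z v (k-1)).ncard ≤ M := by
            intro z hz
            obtain ⟨g, hg, hzg⟩ := Finset.mem_biUnion.1 hz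
            simp only [Finset.mem_filter, List.mem_toFinset] at hzg
            exact hM z ((hF.1 g hg).2.2.2 z hzg.1 hzg.2.1 hzg.2.2)
          refine le_trans (Finset.sum_le_sum hall) ?_
          rw [Finset.sum_const, smul_eq_mul]
          have := Nat.mul_le_mul_right M hIcard
          refine le_trans this ?_
          have := Nat.mul_le_mul_right (k-1) (hcard F hF)
          exact le_trans (Nat.mul_le_mul_right M this) (le_refl _)
        omega

lemma NUM0 {p k : ℕ} (hp : 1 ≤ p) (hk : 1 ≤ k) :
    p + p*(k-1)*((p*(k-1))^(2*(k-1)) - 1) ≤ p*k*(p*(k-1))^(2*(k-1)) := by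
  obtain ⟨t, rfl⟩ : ∃ t, k = t + 1 := ⟨k-1, by omega⟩
  simp only [Nat.add_sub_cancel]
  set X := (p*t)^(2*t) with hX
  have hX1 : 1 ≤ X := by
    rcases Nat.eq_zero_or_pos t with rfl | ht
    · simp [hX]
    · exact Nat.one_le_pow _ _ (by positivity)
  obtain ⟨Y, hY⟩ : ∃ Y, X = Y + 1 := ⟨X-1, by omega⟩
  rw [hY]
  simp only [Nat.add_sub_cancel]
  nlinarith [Nat.zero_le (p*t*Y), Nat.zero_le (p*Y)]

lemma NUM1 {p : ℕ} (hp : 2 ≤ p) {j : ℕ} (hj : 1 ≤ j) :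
    p*j*(p*(j-1))^(2*(j-1))
      + ∑ a ∈ Finset.Icc 1 (j-1), (p*a*(p*(a-1))^(2*(a-1))) * ((p*(j-a))^(2*(j-a)) - 1)
      ≤ (p*j)^(2*j) - 1 := by
  obtain ⟨m, rfl⟩ : ∃ m, j = m + 1 := ⟨j-1, by omega⟩
  simp only [Nat.add_sub_cancel]
  have hΨ1 : ∀ t : ℕ, 1 ≤ (p*t)^(2*t) := by
    intro t
    rcases Nat.eq_zero_or_pos t with rfl | ht
    · simp
    · exact Nat.one_le_pow _ _ (by positivity)
  have hLHS : p*(m+1)*(p*m)^(2*m)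
      + ∑ a ∈ Finset.Icc 1 m, (p*a*(p*(a-1))^(2*(a-1))) * ((p*(m+1-a))^(2*(m+1-a)) - 1)
      ≤ ∑ a ∈ Finset.Icc 1 (m+1), (p*a*(p*(a-1))^(2*(a-1))) * (p*(m+1-a))^(2*(m+1-a)) := by
    rw [Finset.sum_Icc_succ_top (by omega : 1 ≤ m + 1)]
    have h1 : ∑ a ∈ Finset.Icc 1 m, (p*a*(p*(a-1))^(2*(a-1))) * ((p*(m+1-a))^(2*(m+1-a)) - 1)
        ≤ ∑ a ∈ Finset.Icc 1 m, (p*a*(p*(a-1))^(2*(a-1))) * (p*(m+1-a))^(2*(m+1-a)) :=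
      Finset.sum_le_sum (fun a _ => Nat.mul_le_mul_left _ (Nat.sub_le _ _))
    have h2 : (p*(m+1)*(p*(m+1-1))^(2*(m+1-1))) * (p*(m+1-(m+1)))^(2*(m+1-(m+1)))
        = p*(m+1)*(p*m)^(2*m) := by
      simp
    omega
  have hpS : p * ∑ a ∈ Finset.Icc 1 (m+1), (p*a*(p*(a-1))^(2*(a-1))) * (p*(m+1-a))^(2*(m+1-a))
      ≤ (p*(m+1))^(2*(m+1)) := by
    rw [Finset.mul_sum]
    have hterm : ∀ a ∈ Finset.Icc 1 (m+1),
        p * ((p*a*(p*(a-1))^(2*(a-1))) * (p*(m+1-a))^(2*(m+1-a)))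
          ≤ p^2*(m+1)*(p*(m+1))^(2*(m+1)-2) := by
      intro a ha
      obtain ⟨ha1, ha2⟩ := Finset.mem_Icc.1 ha
      have h1 : (p*(a-1))^(2*(a-1)) ≤ (p*(m+1))^(2*(a-1)) :=
        Nat.pow_le_pow_left (Nat.mul_le_mul_left _ (by omega)) _
      have h2 : (p*(m+1-a))^(2*(m+1-a)) ≤ (p*(m+1))^(2*(m+1-a)) :=
        Nat.pow_le_pow_left (Nat.mul_le_mul_left _ (by omega)) _
      calc p * ((p*a*(p*(a-1))^(2*(a-1))) * (p*(m+1-a))^(2*(m+1-a)))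
          ≤ p * ((p*(m+1)*(p*(m+1))^(2*(a-1))) * (p*(m+1))^(2*(m+1-a))) := by
            refine Nat.mul_le_mul_left _ ?_
            exact Nat.mul_le_mul (Nat.mul_le_mul (Nat.mul_le_mul_left _ (by omega)) h1) h2
        _ = p^2*(m+1)*((p*(m+1))^(2*(a-1)) * (p*(m+1))^(2*(m+1-a))) := by ring
        _ = p^2*(m+1)*(p*(m+1))^(2*(m+1)-2) := by
            rw [← pow_add]
            congr 2
            omega
    refine le_trans (Finset.sum_le_sum hterm) ?_
    rw [Finset.sum_const, Nat.card_Icc, smul_eq_mul]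
    have he : (m + 1 + 1 - 1) = m + 1 := by omega
    rw [he]
    refine le_of_eq ?_
    calc (m+1) * (p^2*(m+1)*(p*(m+1))^(2*(m+1)-2))
        = (p*(m+1))^2 * (p*(m+1))^(2*(m+1)-2) := by ring
      _ = (p*(m+1))^(2*(m+1)) := by rw [← pow_add]; congr 1; omega
  have h2S : 2 * ∑ a ∈ Finset.Icc 1 (m+1), (p*a*(p*(a-1))^(2*(a-1))) * (p*(m+1-a))^(2*(m+1-a))
      ≤ (p*(m+1))^(2*(m+1)) := le_trans (Nat.mul_le_mul_right _ hp) hpS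
  have := hΨ1 (m+1)
  omega

lemma ncard_prod {α β : Type*} (A : Set α) (B : Set β) :
    (A ×ˢ B).ncard = A.ncard * B.ncard := by
  rw [← Nat.card_coe_set_eq, ← Nat.card_coe_set_eq, ← Nat.card_coe_set_eq,
    ← Nat.card_prod]
  exact Nat.card_congr (Equiv.Set.prod A B)

lemma ncard_setsets {α : Type*} [Fintype α] :
    (Set.univ : Set (Set α)).ncard = 2 ^ (Fintype.card α) := by
  classical
  rw [Set.ncard_univ, Nat.card_eq_fintype_card, Fintype.card_set]

lemma card_sym2_fin (r : ℕ) : Fintype.card (Sym2 (Fin r)) = r * (r+1) / 2 := by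
  rw [Sym2.card]
  rw [Fintype.card_fin, Nat.choose_two_right]
  simp [Nat.mul_comm]

-- count of small subsets
lemma count_small_subsets {α : Type*} [DecidableEq α] (T : Finset α) (m : ℕ) :
    (T.powerset.filter (fun s => s.card ≤ m)).card ≤ (m+1) * (T.card + 1)^m := by
  classical
  have hsub : (T.powerset.filter (fun s => s.card ≤ m)) ⊆
      (Finset.range (m+1)).biUnion (fun i => T.powersetCard i) := by
    intro s hs
    rw [Finset.mem_filter, Finset.mem_powerset] at hs
    refine Finset.mem_biUnion.2 ⟨s.card, Finset.mem_range.2 (by omega), ?_⟩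
    rw [Finset.mem_powersetCard]
    exact ⟨hs.1, rfl⟩
  refine le_trans (Finset.card_le_card hsub) (le_trans Finset.card_biUnion_le ?_)
  have hterm : ∀ i ∈ Finset.range (m+1), (T.powersetCard i).card ≤ (T.card+1)^m := by
    intro i hi
    rw [Finset.card_powersetCard]
    refine le_trans (Nat.choose_le_pow _ _) ?_
    calc T.card ^ i ≤ (T.card+1) ^ i := Nat.pow_le_pow_left (by omega) _
      _ ≤ (T.card+1) ^ m := Nat.pow_le_pow_right (by omega) (by
          have := Finset.mem_range.1 hi; omega)
  refine le_trans (Finset.sum_le_sum hterm) ?_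
  rw [Finset.sum_const, Finset.card_range, smul_eq_mul]

lemma NUMEXP {r : ℕ} (hr : 2 ≤ r) :
    (Nat.log 2 r + 2) * ((2*r-3)*(r-2) + 2) + r*(r+1)/2 ≤ 3*r^2*(Nat.log 2 r) := by
  set L := Nat.log 2 r with hL
  have h2L : 2^L ≤ r := Nat.pow_log_le_self 2 (by omega)
  have hup : r < 2^(L+1) := Nat.lt_pow_succ_log_self (by norm_num) r
  obtain ⟨s, rfl⟩ : ∃ s, r = s + 2 := ⟨r-2, by omega⟩
  have hsub1 : 2*(s+2)-3 = 2*s+1 := by omega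
  have hsub2 : (s+2)-2 = s := by omega
  rw [hsub1, hsub2]
  have hc : (s+2)*(s+3)/2*2 = (s+2)*(s+3) := by
    refine Nat.div_mul_cancel ?_
    rcases Nat.even_or_odd s with h | h
    · exact Dvd.dvd.mul_right (h.add_one.add_one.two_dvd) _
    · exact Dvd.dvd.mul_left ((h.add_one).add_one.add_one.two_dvd) _
  have hdiv : (s+2)*(s+3) = (s+2)*((s+2)+1) := by ring
  by_cases hbig : 32 ≤ s + 2
  · have hL5 : 5 ≤ L := by
      rw [hL, Nat.le_log_iff_pow_le (by norm_num) (by omega)]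
      omega
    have key : 2*((L+2)*((2*s+1)*s+2)) + (s+2)*(s+3) ≤ 2*(3*(s+2)^2*L) := by
      nlinarith [hL5, hbig, sq_nonneg s, Nat.zero_le (s*L), Nat.zero_le (s*s*L)]
    omega
  · -- small cases: r = s+2 < 32
    have hs : s < 30 := by omega
    have hr32 : s + 2 < 32 := by omega
    -- determine L by ranges
    have hLval : (s+2 < 4 ∧ L = 1) ∨ (4 ≤ s+2 ∧ s+2 < 8 ∧ L = 2) ∨
        (8 ≤ s+2 ∧ s+2 < 16 ∧ L = 3) ∨ (16 ≤ s+2 ∧ s+2 < 32 ∧ L = 4) := by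
      rcases Nat.lt_or_ge (s+2) 4 with h | h
      · exact Or.inl ⟨h, Nat.log_eq_of_pow_le_of_lt_pow (by omega) (by omega)⟩
      rcases Nat.lt_or_ge (s+2) 8 with h' | h'
      · exact Or.inr (Or.inl ⟨h, h', Nat.log_eq_of_pow_le_of_lt_pow (by omega) (by omega)⟩)
      rcases Nat.lt_or_ge (s+2) 16 with h'' | h''
      · exact Or.inr (Or.inr (Or.inl ⟨h', h'',
          Nat.log_eq_of_pow_le_of_lt_pow (by omega) (by omega)⟩))
      · exact Or.inr (Or.inr (Or.inr ⟨h'', by omega,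
          Nat.log_eq_of_pow_le_of_lt_pow (by omega) (by omega)⟩))
    rcases hLval with ⟨h4, hLv⟩ | ⟨h4, h8, hLv⟩ | ⟨h8, h16, hLv⟩ | ⟨h16, h32, hLv⟩
    · rw [hLv]
      have hs1 : s < 2 := by omega
      interval_cases s <;> norm_num
    · rw [hLv]
      have hs1 : 2 ≤ s := by omega
      have hs2 : s < 6 := by omega
      interval_cases s <;> norm_num
    · rw [hLv]
      have hs1 : 6 ≤ s := by omega
      have hs2 : s < 14 := by omega
      interval_cases s <;> norm_num
    · rw [hLv]
      have hs1 : 14 ≤ s := by omega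
      have hs2 : s < 30 := by omega
      interval_cases s <;> norm_num

lemma NUMFIN {p r : ℕ} (hp : 2 ≤ p) (hr : 2 ≤ r) :
    ((r-1) * ((p*(r-1)*(p*(r-2))^(2*(r-2))) + 1)^(r-2)) * ((r+1) * 2^(r*(r+1)/2))
      ≤ p^(3*r^2*Nat.log 2 r) := by
  set L := Nat.log 2 r with hL
  set E1 := (2*r-3)*(r-2) + 2 with hE1
  set E2 := r*(r+1)/2 with hE2
  have hB1 : (p*(r-1)*(p*(r-2))^(2*(r-2))) + 1 ≤ (p*r)^(2*r-3) := by
    have h1 : p*(r-1)*(p*(r-2))^(2*(r-2)) ≤ (p*(r-1))^(2*r-3) := by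
      have ha : (p*(r-2))^(2*(r-2)) ≤ (p*(r-1))^(2*(r-2)) :=
        Nat.pow_le_pow_left (Nat.mul_le_mul_left _ (by omega)) _
      calc p*(r-1)*(p*(r-2))^(2*(r-2)) ≤ p*(r-1)*(p*(r-1))^(2*(r-2)) :=
            Nat.mul_le_mul_left _ ha
        _ = (p*(r-1))^(1 + 2*(r-2)) := by rw [pow_add, pow_one]
        _ = (p*(r-1))^(2*r-3) := by congr 1; omega
    have h2 : (p*(r-1))^(2*r-3) < (p*r)^(2*r-3) := by
      refine Nat.pow_lt_pow_left ?_ (by omega)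
      exact mul_lt_mul_of_pos_left (by omega : r - 1 < r) (by omega : 0 < p)
    exact Nat.succ_le_of_lt (lt_of_le_of_lt h1 h2)
  have hstep1 : ((p*(r-1)*(p*(r-2))^(2*(r-2))) + 1)^(r-2) ≤ (p*r)^((2*r-3)*(r-2)) := by
    calc ((p*(r-1)*(p*(r-2))^(2*(r-2))) + 1)^(r-2) ≤ ((p*r)^(2*r-3))^(r-2) :=
          Nat.pow_le_pow_left hB1 _
      _ = (p*r)^((2*r-3)*(r-2)) := by rw [← pow_mul]
  have hrr : (r-1)*(r+1) ≤ (p*r)^2 := by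
    have h1 : (r-1)*(r+1) ≤ r*r := by
      obtain ⟨t, ht⟩ : ∃ t, r = t+1 := ⟨r-1, by omega⟩
      subst ht
      simp only [Nat.add_sub_cancel]
      nlinarith
    have h2 : r*r ≤ (p*r)*(p*r) := by
      refine Nat.mul_le_mul ?_ ?_ <;> exact Nat.le_mul_of_pos_left r (by omega)
    calc (r-1)*(r+1) ≤ r*r := h1
      _ ≤ (p*r)*(p*r) := h2
      _ = (p*r)^2 := by ring
  have hmain : ((r-1) * ((p*(r-1)*(p*(r-2))^(2*(r-2))) + 1)^(r-2)) * ((r+1) * 2^E2)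
      ≤ (p*r)^E1 * 2^E2 := by
    have : ((r-1) * ((p*(r-1)*(p*(r-2))^(2*(r-2))) + 1)^(r-2)) * ((r+1) * 2^E2)
        = ((r-1)*(r+1)) * (((p*(r-1)*(p*(r-2))^(2*(r-2))) + 1)^(r-2) * 2^E2) := by ring
    rw [this]
    have h3 : ((r-1)*(r+1)) * (((p*(r-1)*(p*(r-2))^(2*(r-2))) + 1)^(r-2) * 2^E2)
        ≤ ((p*r)^2) * ((p*r)^((2*r-3)*(r-2)) * 2^E2) := by
      refine Nat.mul_le_mul hrr (Nat.mul_le_mul hstep1 (le_refl _))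
    refine le_trans h3 (le_of_eq ?_)
    rw [hE1, pow_add]
    ring
  refine le_trans hmain ?_
  -- (p*r)^E1 * 2^E2 ≤ p^((L+2)*E1) * p^E2 ≤ p^(3r²L)
  have hpr : p*r ≤ p^(L+2) := by
    have h1 : r < 2^(L+1) := Nat.lt_pow_succ_log_self (by norm_num) r
    have h2 : (2:ℕ)^(L+1) ≤ p^(L+1) := Nat.pow_le_pow_left hp _
    calc p*r ≤ p*(p^(L+1)) := Nat.mul_le_mul_left _ (by omega)
      _ = p^(L+2) := by rw [← pow_succ']
  have hfin : (p*r)^E1 * 2^E2 ≤ p^((L+2)*E1) * p^E2 := by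
    refine Nat.mul_le_mul ?_ (Nat.pow_le_pow_left hp _)
    calc (p*r)^E1 ≤ (p^(L+2))^E1 := Nat.pow_le_pow_left hpr _
      _ = p^((L+2)*E1) := by rw [← pow_mul]
  refine le_trans hfin ?_
  rw [← pow_add]
  refine Nat.pow_le_pow_right (by omega) ?_
  have := NUMEXP hr
  rw [← hL, ← hE1, ← hE2] at this
  omega


lemma ncard_set_biUnion_le {β γ : Type*} (S : Set β) (hS : S.Finite) (T : β → Set γ)
    (hfin : ∀ q, (T q).Finite) (M : ℕ) (h : ∀ q ∈ S, (T q).ncard ≤ M) :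
    (⋃ q ∈ S, T q).ncard ≤ S.ncard * M := by
  classical
  have he : (⋃ q ∈ S, T q) = ⋃ q ∈ hS.toFinset, T q := by
    simp [Set.Finite.mem_toFinset]
  rw [he]
  refine le_trans (ncard_biUnion_le' _ _ (fun a _ => hfin a)) ?_
  refine le_trans (Finset.sum_le_sum (fun q hq => h q (hS.mem_toFinset.1 hq))) ?_
  rw [Finset.sum_const, smul_eq_mul, Set.ncard_eq_toFinset_card S hS]

lemma RR_main [LinearOrder V] {G : SimpleGraph V} {p r : ℕ} (hp : 2 ≤ p)
    (hadm : AdmAtMost G p r) (hfin : ∀ z v k, (RRset G z v k).Finite) :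
    ∀ j, j ≤ r → ∀ v x : V, v < x → (RRset G x v j).ncard ≤ (p*j)^(2*j) - 1 := by
  intro j
  induction j using Nat.strong_induction_on with
  | _ j IH =>
  intro hjr v x hvx
  -- the strong-reach bound, available for all budgets ≤ j
  have hσ : ∀ k, 1 ≤ k → k ≤ j → ∀ x' : V,
      (RRset G x' x' k).ncard ≤ p*k*(p*(k-1))^(2*(k-1)) := by
    intro k hk1 hkj x'
    have hM : ∀ z, x' < z → (RRset G z x' (k-1)).ncard ≤ (p*(k-1))^(2*(k-1)) - 1 :=
      fun z hz => IH (k-1) (by omega) (by omega) x' z hz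
    exact le_trans (SR_step hadm hfin x' k hk1 (by omega) _ hM) (NUM0 (by omega) hk1)
  rcases Nat.eq_zero_or_pos j with rfl | hj1
  · have : RRset G x v 0 = ∅ := by
      ext u
      simp only [RRset, Set.mem_setOf_eq, Set.mem_empty_iff_false, iff_false, not_and]
      intro huv
      rintro ⟨w, -, hlen, -⟩
      have := Walk.eq_of_length_eq_zero (Nat.le_zero.1 hlen)
      exact (huv.trans hvx).ne' this
    rw [this]
    simp
  -- decomposition
  have hsub : RRset G x v j ⊆ RRset G x x j ∪
      ⋃ a ∈ Finset.Icc 1 (j-1), ⋃ q ∈ (RRset G x x a ∩ Set.Ioi v), RRset G q v (j-a) := by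
    intro u hu
    obtain ⟨huv, w, hw1, hw2, hw3⟩ := hu
    obtain ⟨q, w₁, w₂, hq, hp1, hp2, hl1, happ, hint1⟩ :=
      walk_split (fun y => y < x) w hw1 (lt_irrefl x) (huv.trans hvx)
    have hsupp : w.support = w₁.support ++ w₂.support.tail := by
      rw [← Walk.support_append, happ]
    have hlen12 : w₁.length + w₂.length = w.length := by
      rw [← Walk.length_append, happ]
    have hsub1 : ∀ y ∈ w₁.support, y ∈ w.support := by
      intro y hy; rw [hsupp]; exact List.mem_append_left _ hy
    have hsub2 : ∀ y ∈ w₂.support, y ∈ w.support := by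
      intro y hy
      rw [Walk.support_eq_cons] at hy
      rcases List.mem_cons.1 hy with rfl | hy
      · exact hsub1 _ (Walk.end_mem_support w₁)
      · rw [hsupp]; exact List.mem_append_right _ hy
    have hxw2 : x ∉ w₂.support.tail := by
      intro hc
      have hnodup := hw1.support_nodup
      rw [hsupp] at hnodup
      exact (List.disjoint_of_nodup_append hnodup) (Walk.start_mem_support w₁) hc
    have hw1int : ∀ y ∈ w₁.support, y ≠ x → y ≠ q → x < y := by
      intro y hy hyx hyq
      have := hint1 y hy hyq
      push_neg at this
      exact lt_of_le_of_ne this (Ne.symm hyx)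
    rcases eq_or_ne q u with rfl | hqu
    · left
      exact ⟨huv.trans hvx, w₁, hp1, by omega, hw1int⟩
    · right
      have hw2len : 1 ≤ w₂.length := by
        rcases Nat.eq_zero_or_pos w₂.length with h0 | h
        · exact absurd (Walk.eq_of_length_eq_zero h0) hqu
        · exact h
      have hqx : q ≠ x := ne_of_lt hq
      have hqv : v < q := hw3 q (hsub1 _ (Walk.end_mem_support w₁)) hqx hqu
      refine Set.mem_biUnion (Finset.mem_Icc.2 ⟨hl1, by omega⟩) ?_
      refine Set.mem_biUnion (⟨⟨hq, w₁, hp1, le_refl _, ?_⟩, hqv⟩ :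
        q ∈ RRset G x x w₁.length ∩ Set.Ioi v) ?_
      · exact hw1int
      · refine ⟨huv, w₂, hp2, by omega, ?_⟩
        intro y hy hyq hyu
        have hyx : y ≠ x := by
          rintro rfl
          rw [Walk.support_eq_cons] at hy
          rcases List.mem_cons.1 hy with h | h
          · exact hqx h.symm
          · exact hxw2 h
        exact hw3 y (hsub2 y hy) hyx hyu
  -- counting
  have hfin2 : (RRset G x x j ∪
      ⋃ a ∈ Finset.Icc 1 (j-1), ⋃ q ∈ (RRset G x x a ∩ Set.Ioi v), RRset G q v (j-a)).Finite := by
    refine Set.Finite.union (hfin _ _ _) ?_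
    refine Set.Finite.biUnion (Finset.finite_toSet _) (fun a _ => ?_)
    exact Set.Finite.biUnion ((hfin x x a).inter_of_left _) (fun q _ => hfin _ _ _)
  refine le_trans (le_trans (Set.ncard_le_ncard hsub hfin2) (Set.ncard_union_le _ _)) ?_
  have hterm : ∀ a ∈ Finset.Icc 1 (j-1),
      (⋃ q ∈ (RRset G x x a ∩ Set.Ioi v), RRset G q v (j-a)).ncard
        ≤ (p*a*(p*(a-1))^(2*(a-1))) * ((p*(j-a))^(2*(j-a)) - 1) := by
    intro a ha
    obtain ⟨ha1, ha2⟩ := Finset.mem_Icc.1 ha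
    have h1 : ∀ q ∈ (RRset G x x a ∩ Set.Ioi v), (RRset G q v (j-a)).ncard
        ≤ (p*(j-a))^(2*(j-a)) - 1 := by
      intro q hq
      exact IH (j-a) (by omega) (by omega) v q hq.2
    refine le_trans (ncard_set_biUnion_le _ ((hfin x x a).inter_of_left _) _
      (fun q => hfin _ _ _) _ h1) ?_
    refine Nat.mul_le_mul_right _ ?_
    refine le_trans (Set.ncard_le_ncard Set.inter_subset_left (hfin x x a)) ?_
    exact hσ a ha1 (by omega) x
  have hU : (⋃ a ∈ Finset.Icc 1 (j-1), ⋃ q ∈ (RRset G x x a ∩ Set.Ioi v),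
      RRset G q v (j-a)).ncard
      ≤ ∑ a ∈ Finset.Icc 1 (j-1), (p*a*(p*(a-1))^(2*(a-1))) * ((p*(j-a))^(2*(j-a)) - 1) := by
    refine le_trans (ncard_biUnion_le' _ _ (fun a _ => ?_)) (Finset.sum_le_sum hterm)
    exact Set.Finite.biUnion ((hfin x x a).inter_of_left _) (fun q _ => hfin _ _ _)
  have hL : (RRset G x x j).ncard ≤ p*j*(p*(j-1))^(2*(j-1)) := hσ j hj1 (le_refl _) x
  exact le_trans (Nat.add_le_add hL hU) (NUM1 hp hj1)


section S5
variable [Fintype V] [LinearOrder V] [Fintype W] {G : SimpleGraph V} {H : SimpleGraph W}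

lemma verts_ncard (P : UPair G H) : P.J.verts.ncard = Fintype.card W := by
  obtain ⟨f, hinj, hrange, -⟩ := P.isHSub
  rw [← hrange, ← Set.image_univ, Set.ncard_image_of_injective _ hinj, Set.ncard_univ,
    Nat.card_eq_fintype_card]

lemma A_ncard {r : ℕ} (hW : Fintype.card W ≤ r) (P : UPair G H) : P.A.ncard ≤ r := by
  refine le_trans (Set.ncard_le_ncard P.isUseful.1 (Set.toFinite _)) ?_
  rw [verts_ncard]; exact hW

lemma D_ncard {r : ℕ} (hW : Fintype.card W ≤ r) (P : UPair G H) : P.D.ncard + 1 ≤ r := by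
  obtain ⟨hA, ⟨hDne, hDA, hnb, hord, hcl⟩, hconn⟩ := P.isUseful
  obtain ⟨u₀, hu₀⟩ := hDne
  obtain ⟨w₀, hw₀, -⟩ := hnb u₀ hu₀
  have h1 : P.D.ncard < P.A.ncard := by
    refine Set.ncard_lt_ncard ?_ (Set.toFinite _)
    exact ⟨hDA, fun hc => hw₀.2 (hc hw₀.1)⟩
  have := A_ncard hW P
  omega

lemma AD_ncard (P : UPair G H) : (P.A \ P.D).ncard = P.A.ncard - P.D.ncard :=
  Set.ncard_diff P.isUseful.2.1.2.1 (Set.toFinite _)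

lemma prefix_mem_RR {r : ℕ} (hW : Fintype.card W ≤ r) (P : UPair G H) (v : V)
    (hv : v ∈ P.D) : ∀ u ∈ P.D, u < v → u ∈ RRset G v v (r-1) := by
  classical
  intro u hu huv
  obtain ⟨hA, ⟨hDne, hDA, hnb, hord, hcl⟩, hconn⟩ := P.isUseful
  obtain ⟨a, ha, hva⟩ := hnb v hv
  obtain ⟨b, hb, hub⟩ := hnb u hu
  -- a walk from a to b inside A \ D
  have hconn' : (P.J.induce (P.A \ P.D)).coe.Connected := hconn.coe
  have hreach := hconn'.preconnected
    ⟨a, by rw [Subgraph.induce_verts]; exact ha⟩ ⟨b, by rw [Subgraph.induce_verts]; exact hb⟩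
  obtain ⟨w0⟩ := hreach
  set w1 := w0.bypass with hw1
  have hw1p : w1.IsPath := Walk.bypass_isPath w0
  -- card of the coe vertex type
  have hcardAD : Fintype.card ↥(P.J.induce (P.A \ P.D)).verts = (P.A \ P.D).ncard := by
    have hv' : (P.J.induce (P.A \ P.D)).verts = (P.A \ P.D) := Subgraph.induce_verts _ _
    calc Fintype.card ↥(P.J.induce (P.A \ P.D)).verts
        = Nat.card ↥(P.J.induce (P.A \ P.D)).verts := Nat.card_eq_fintype_card.symm
      _ = (P.J.induce (P.A \ P.D)).verts.ncard := Nat.card_coe_set_eq _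
      _ = (P.A \ P.D).ncard := by rw [hv']
  have hw1len : w1.length + 1 ≤ (P.A \ P.D).ncard := by
    have := hw1p.length_lt
    omega
  -- map to G
  have hwablen : (w1.map (Subgraph.hom _)).length = w1.length := Walk.length_map _ _
  have hwabsupp : ∀ y ∈ (w1.map (Subgraph.hom _)).support, y ∈ P.A \ P.D := by
    intro y hy
    simp only [Walk.support_map, List.mem_map] at hy
    obtain ⟨z, hz, rfl⟩ := hy
    exact z.2
  -- big walk
  have hGva : G.Adj v a := P.J.adj_sub hva
  have hGbu : G.Adj b u := P.J.adj_sub hub.symm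
  set big : G.Walk v u := Walk.cons hGva ((w1.map (Subgraph.hom _)).append (Walk.cons hGbu Walk.nil)) with hbig
  have hbiglen : big.length = (w1.map (Subgraph.hom _)).length + 2 := by
    rw [hbig]
    simp [Walk.length_append]
    exact (Walk.length_append _ _).trans (by simp)
  have hbigsupp : ∀ y ∈ big.support, y = v ∨ y = u ∨ y ∈ P.A \ P.D := by
    intro y hy
    erw [hbig, Walk.support_cons, List.mem_cons] at hy
    rcases hy with rfl | hy
    · exact Or.inl rfl
    erw [Walk.support_append, List.mem_append] at hy
    rcases hy with hy | hy
    · exact Or.inr (Or.inr (hwabsupp y hy))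
    · erw [Walk.support_cons, Walk.support_nil] at hy
      right; left
      simpa using hy
  -- D has at least two elements
  have hD2 : 2 ≤ P.D.ncard := by
    rw [show (2:ℕ) = ({u, v} : Set V).ncard by
      rw [Set.ncard_pair (ne_of_lt huv)]]
    exact Set.ncard_le_ncard (by intro z hz; rcases hz with rfl | rfl; exacts [hu, hv])
      (Set.toFinite _)
  have hADle : (P.A \ P.D).ncard + 2 ≤ Fintype.card W := by
    have h1 := AD_ncard P
    have h2 : P.A.ncard ≤ Fintype.card W := by
      refine le_trans (Set.ncard_le_ncard P.isUseful.1 (Set.toFinite _)) (le_of_eq ?_)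
      exact verts_ncard P
    have h3 : P.D.ncard ≤ P.A.ncard := Set.ncard_le_ncard hDA (Set.toFinite _)
    omega
  have hbig_le : big.length ≤ r - 1 := by omega
  -- bypass
  refine ⟨huv, big.bypass, Walk.bypass_isPath _, le_trans (Walk.length_bypass_le _) hbig_le, ?_⟩
  intro y hy hyv hyu
  have := hbigsupp y (Walk.support_bypass_subset _ hy)
  rcases this with rfl | rfl | hyAD
  · exact absurd rfl hyv
  · exact absurd rfl hyu
  · exact hord v hv y hyAD

end S5


lemma nat_downclosed (s : Finset ℕ) (hdc : ∀ a b : ℕ, a ≤ b → b ∈ s → a ∈ s) :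
    ∀ a, a ∈ s ↔ a < s.card := by
  intro a
  constructor
  · intro ha
    have hsub : Finset.range (a+1) ⊆ s := by
      intro b hb
      exact hdc b a (by simpa using Nat.lt_succ_iff.1 (Finset.mem_range.1 hb)) ha
    have := Finset.card_le_card hsub
    rw [Finset.card_range] at this
    omega
  · intro ha
    by_contra hc
    have hsub : s ⊆ Finset.range a := by
      intro b hb
      rw [Finset.mem_range]
      by_contra hba
      exact hc (hdc a b (by omega) hb)
    have := Finset.card_le_card hsub
    rw [Finset.card_range] at this
    omega

lemma fin_downclosed {n : ℕ} (s : Finset (Fin n))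
    (hdc : ∀ i j : Fin n, i ≤ j → j ∈ s → i ∈ s) :
    ∀ i : Fin n, i ∈ s ↔ (i : ℕ) < s.card := by
  classical
  intro i
  set s' := s.image (Fin.val) with hs'
  have hcard : s'.card = s.card := Finset.card_image_of_injective _ Fin.val_injective
  have hdc' : ∀ a b : ℕ, a ≤ b → b ∈ s' → a ∈ s' := by
    intro a b hab hb
    obtain ⟨jf, hjf, rfl⟩ := Finset.mem_image.1 hb
    have haf : a < n := lt_of_le_of_lt hab jf.2
    refine Finset.mem_image.2 ⟨⟨a, haf⟩, hdc ⟨a, haf⟩ jf hab hjf, rfl⟩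
  have := nat_downclosed s' hdc' i
  rw [hcard] at this
  rw [← this]
  constructor
  · intro h; exact Finset.mem_image.2 ⟨i, h, rfl⟩
  · intro h
    obtain ⟨jf, hjf, hval⟩ := Finset.mem_image.1 h
    rwa [← Fin.val_injective hval]

section S6
variable [Fintype V] [LinearOrder V] [Fintype W] {G : SimpleGraph V} {H : SimpleGraph W}

noncomputable def nA (P : UPair G H) : ℕ := (Set.toFinite P.A).toFinset.card

noncomputable def posIso (P : UPair G H) :
    Fin (nA P) ≃o ↥((Set.toFinite P.A).toFinset) :=
  (Set.toFinite P.A).toFinset.orderIsoOfFin rfl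

noncomputable def invar (r : ℕ) (P : UPair G H) : Set V × ℕ × Set (Sym2 (Fin r)) :=
  (P.D, nA P, {e | ∃ i j : Fin r, e = s(i,j) ∧ ∃ (hi : (i:ℕ) < nA P) (hj : (j:ℕ) < nA P),
     P.J.Adj (posIso P ⟨i.1, hi⟩ : V) (posIso P ⟨j.1, hj⟩ : V)})

lemma posIso_memA (P : UPair G H) (i : Fin (nA P)) : (posIso P i : V) ∈ P.A := by
  have := (posIso P i).2
  rwa [Set.Finite.mem_toFinset] at this

/-- the prefix is an initial segment of A -/
lemma mem_D_iff_index (P : UPair G H) (i : Fin (nA P)) :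
    (posIso P i : V) ∈ P.D ↔ (i : ℕ) < P.D.ncard := by
  classical
  set s : Finset (Fin (nA P)) := Finset.univ.filter (fun i => (posIso P i : V) ∈ P.D)
    with hs
  have hdc : ∀ i j : Fin (nA P), i ≤ j → j ∈ s → i ∈ s := by
    intro i j hij hj
    rw [hs, Finset.mem_filter] at hj ⊢
    refine ⟨Finset.mem_univ _, ?_⟩
    by_contra hc
    have hiAD : (posIso P i : V) ∈ P.A \ P.D := ⟨posIso_memA P i, hc⟩
    have := P.isUseful.2.1.2.2.2.1 _ hj.2 _ hiAD
    -- (posIso P j : V) < (posIso P i : V), contradicting monotonicity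
    have hmono : (posIso P i : V) ≤ (posIso P j : V) := by
      have := (posIso P).monotone hij
      exact Subtype.coe_le_coe.2 this
    exact absurd this (not_lt.2 hmono)
  have hcard : s.card = P.D.ncard := by
    rw [Set.ncard_eq_toFinset_card P.D (Set.toFinite _)]
    refine Finset.card_bij (fun i _ => (posIso P i : V)) ?_ ?_ ?_
    · intro i hi
      rw [hs, Finset.mem_filter] at hi
      rw [Set.Finite.mem_toFinset]
      exact hi.2
    · intro i hi j hj hij
      have := Subtype.ext hij
      exact (posIso P).injective this
    · intro d hd
      rw [Set.Finite.mem_toFinset] at hd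
      have hdA : d ∈ (Set.toFinite P.A).toFinset := by
        rw [Set.Finite.mem_toFinset]
        exact P.isUseful.2.1.2.1 hd
      refine ⟨(posIso P).symm ⟨d, hdA⟩, ?_, ?_⟩
      · rw [hs, Finset.mem_filter]
        refine ⟨Finset.mem_univ _, ?_⟩
        have : (posIso P) ((posIso P).symm ⟨d, hdA⟩) = ⟨d, hdA⟩ :=
          OrderIso.apply_symm_apply _ _
        rw [this]
        exact hd
      · show ((posIso P) ((posIso P).symm ⟨d, hdA⟩) : V) = d
        have : (posIso P) ((posIso P).symm ⟨d, hdA⟩) = ⟨d, hdA⟩ :=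
          OrderIso.apply_symm_apply _ _
        rw [this]
  have := fin_downclosed s hdc i
  rw [hcard] at this
  rw [← this, hs, Finset.mem_filter]
  simp


lemma adj_dir {r : ℕ} (P Q : UPair G H) (hnr : nA P ≤ r) (hn : nA P = nA Q)
    (hE : (invar r P).2.2 = (invar r Q).2.2) :
    ∀ i j : Fin (nA P), P.J.Adj (posIso P i : V) (posIso P j : V) →
      Q.J.Adj (posIso Q (Fin.cast hn i) : V) (posIso Q (Fin.cast hn j) : V) := by
  intro i j hadj
  have hir : (i : ℕ) < r := lt_of_lt_of_le i.2 hnr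
  have hjr : (j : ℕ) < r := lt_of_lt_of_le j.2 hnr
  have hmem : s((⟨i.1, hir⟩ : Fin r), (⟨j.1, hjr⟩ : Fin r)) ∈ (invar r P).2.2 := by
    refine ⟨⟨i.1, hir⟩, ⟨j.1, hjr⟩, rfl, i.2, j.2, ?_⟩
    have h1 : (⟨(i.1 : ℕ), i.2⟩ : Fin (nA P)) = i := by apply Fin.ext; rfl
    have h2 : (⟨(j.1 : ℕ), j.2⟩ : Fin (nA P)) = j := by apply Fin.ext; rfl
    rw [h1, h2]
    exact hadj
  rw [hE] at hmem
  obtain ⟨i', j', heq, hi', hj', hadj'⟩ := hmem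
  have hkey : ∀ (c : Fin r) (hc : (c : ℕ) < nA Q) (k : Fin (nA P)), (c : ℕ) = (k : ℕ) →
      (⟨(c : ℕ), hc⟩ : Fin (nA Q)) = Fin.cast hn k := by
    intro c hc k h
    apply Fin.ext
    simpa using h
  rcases Sym2.eq_iff.1 heq with ⟨hii, hjj⟩ | ⟨hij, hji⟩
  · have e1 := hkey i' hi' i (by rw [← hii])
    have e2 := hkey j' hj' j (by rw [← hjj])
    rwa [e1, e2] at hadj'
  · have e1 := hkey i' hi' j (by rw [← hji])
    have e2 := hkey j' hj' i (by rw [← hij])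
    rw [e1, e2] at hadj'
    exact hadj'.symm

lemma sim_of_invar {r : ℕ} (P Q : UPair G H) (hnr : nA P ≤ r)
    (hinv : invar r P = invar r Q) : UPairSimilar P Q := by
  classical
  have hD : P.D = Q.D := congrArg Prod.fst hinv
  have hn : nA P = nA Q := congrArg (fun x => x.2.1) hinv
  have hE : (invar r P).2.2 = (invar r Q).2.2 := congrArg (fun x => x.2.2) hinv
  set f : V → V := fun z =>
    if hz : z ∈ (Set.toFinite P.A).toFinset then
      ((posIso Q) (Fin.cast hn ((posIso P).symm ⟨z, hz⟩)) : V)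
    else z with hf
  have hfap : ∀ i : Fin (nA P), f ((posIso P i : V)) = (posIso Q (Fin.cast hn i) : V) := by
    intro i
    have hmem : ((posIso P i : V)) ∈ (Set.toFinite P.A).toFinset := (posIso P i).2
    rw [hf]
    simp only [hmem, dif_pos]
    congr 2
    have : (⟨(posIso P i : V), hmem⟩ : ↥((Set.toFinite P.A).toFinset)) = posIso P i :=
      Subtype.ext rfl
    rw [this, OrderIso.symm_apply_apply]
  have hrep : ∀ a ∈ P.A, ∃ i : Fin (nA P), (posIso P i : V) = a := by
    intro a ha
    have hmem : a ∈ (Set.toFinite P.A).toFinset := (Set.Finite.mem_toFinset _).2 ha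
    exact ⟨(posIso P).symm ⟨a, hmem⟩, by rw [OrderIso.apply_symm_apply]⟩
  have hrepQ : ∀ b ∈ Q.A, ∃ i : Fin (nA Q), (posIso Q i : V) = b := by
    intro b hb
    have hmem : b ∈ (Set.toFinite Q.A).toFinset := (Set.Finite.mem_toFinset _).2 hb
    exact ⟨(posIso Q).symm ⟨b, hmem⟩, by rw [OrderIso.apply_symm_apply]⟩
  have hDcard : P.D.ncard = Q.D.ncard := by rw [hD]
  refine ⟨hD, f, ⟨?_, ?_, ?_⟩, ?_, ?_, ?_⟩
  · -- MapsTo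
    intro a ha
    obtain ⟨i, rfl⟩ := hrep a ha
    rw [hfap]
    exact posIso_memA Q _
  · -- InjOn
    intro a ha b hb hab
    obtain ⟨i, rfl⟩ := hrep a ha
    obtain ⟨j, rfl⟩ := hrep b hb
    rw [hfap, hfap] at hab
    have h2 := (posIso Q).injective (Subtype.ext hab)
    have hij : i = j := by
      have := congrArg Fin.val h2
      apply Fin.ext
      simpa using this
    rw [hij]
  · -- SurjOn
    intro b hb
    obtain ⟨jq, rfl⟩ := hrepQ b hb
    refine ⟨(posIso P (Fin.cast hn.symm jq) : V), posIso_memA P _, ?_⟩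
    rw [hfap]
    exact congrArg _ (congrArg _ (Fin.val_injective rfl))
  · -- image of D
    apply Set.Subset.antisymm
    · rintro b ⟨a, ha, rfl⟩
      have haA : a ∈ P.A := P.isUseful.2.1.2.1 ha
      obtain ⟨i, rfl⟩ := hrep a haA
      rw [hfap]
      rw [mem_D_iff_index P i] at ha
      have := (mem_D_iff_index Q (Fin.cast hn i)).2 (by rw [← hDcard]; exact ha)
      exact this
    · intro b hb
      have hbA : b ∈ Q.A := Q.isUseful.2.1.2.1 hb
      obtain ⟨jq, rfl⟩ := hrepQ b hbA
      refine ⟨(posIso P (Fin.cast hn.symm jq) : V), ?_, ?_⟩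
      · rw [mem_D_iff_index P, hDcard]
        rw [mem_D_iff_index Q jq] at hb
        exact hb
      · rw [hfap]
        exact congrArg _ (congrArg _ (Fin.val_injective rfl))
  · -- adjacency
    intro a ha b hb
    obtain ⟨i, rfl⟩ := hrep a ha
    obtain ⟨j, rfl⟩ := hrep b hb
    rw [hfap, hfap]
    constructor
    · exact adj_dir P Q hnr hn hE i j
    · intro h
      have := adj_dir Q P (hn ▸ hnr) hn.symm hE.symm (Fin.cast hn i) (Fin.cast hn j) h
      have e1 : Fin.cast hn.symm (Fin.cast hn i) = i := by apply Fin.ext; rfl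
      have e2 : Fin.cast hn.symm (Fin.cast hn j) = j := by apply Fin.ext; rfl
      rwa [e1, e2] at this
  · -- order
    intro a ha b hb
    obtain ⟨i, rfl⟩ := hrep a ha
    obtain ⟨j, rfl⟩ := hrep b hb
    rw [hfap, hfap]
    constructor
    · intro h
      have h1 : posIso P i < posIso P j := Subtype.coe_lt_coe.1 h
      have h2 : i < j := (posIso P).lt_iff_lt.1 h1
      have h3 : Fin.cast hn i < Fin.cast hn j := by
        rw [Fin.lt_def] at h2 ⊢
        simpa using h2
      exact Subtype.coe_lt_coe.2 ((posIso Q).lt_iff_lt.2 h3)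
    · intro h
      have h1 := (posIso Q).lt_iff_lt.1 (Subtype.coe_lt_coe.1 h)
      have h2 : i < j := by
        rw [Fin.lt_def] at h1 ⊢
        simpa using h1
      exact Subtype.coe_lt_coe.2 ((posIso P).lt_iff_lt.2 h2)

end S6


set_option maxHeartbeats 1000000 in
/-- For every vertex `v`, any family of pairwise non-similar useful pairs whose prefix has
maximum `v` has size at most `p^{3r²·log r}`. -/
theorem stmt12 [Fintype V] [LinearOrder V] [Fintype W] (G : SimpleGraph V)
    (H : SimpleGraph W) (hH : H.Connected) (p r : ℕ) (hp : 2 ≤ p)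
    (hW : Fintype.card W ≤ r) (hadm : AdmAtMost G p r) (v : V)
    (𝓕 : Set (UPair G H))
    (hmax : ∀ P ∈ 𝓕, v ∈ P.D ∧ ∀ u ∈ P.D, u ≤ v)
    (hnonsim : ∀ P ∈ 𝓕, ∀ Q ∈ 𝓕, P ≠ Q → ¬ UPairSimilar P Q) :
    𝓕.ncard ≤ p ^ (3 * r ^ 2 * Nat.log 2 r) := by
  classical
  rcases Set.eq_empty_or_nonempty 𝓕 with rfl | ⟨P₀, hP₀⟩
  · simp
  have hfin : ∀ z v k, (RRset G z v k).Finite := fun _ _ _ => Set.toFinite _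
  -- r ≥ 2
  have hr2 : 2 ≤ r := by
    have h2 := D_ncard hW P₀
    have hv0 : v ∈ P₀.D := (hmax P₀ hP₀).1
    have h3 : 0 < P₀.D.ncard := (Set.ncard_pos (Set.toFinite _)).2 ⟨v, hv0⟩
    omega
  set SR := RRset G v v (r-1) with hSR
  -- bound on |SR|
  have hSRcard : SR.ncard ≤ p*(r-1)*(p*(r-2))^(2*(r-2)) := by
    have hsub2 : r - 1 - 1 = r - 2 := by omega
    have hM : ∀ z, v < z → (RRset G z v (r-1-1)).ncard ≤ (p*(r-2))^(2*(r-2)) - 1 := by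
      intro z hz
      rw [hsub2]
      exact RR_main hp hadm hfin (r-2) (by omega) v z hz
    have h1 := SR_step hadm hfin v (r-1) (by omega) (by omega) _ hM
    refine le_trans h1 ?_
    have h2 := NUM0 (p := p) (k := r-1) (by omega) (by omega)
    rw [hsub2] at h2
    exact h2
  -- the invariant is injective on 𝓕
  have hnA : ∀ P : UPair G H, nA P = P.A.ncard := by
    intro P
    rw [nA, Set.ncard_eq_toFinset_card P.A (Set.toFinite _)]
  have hinj : Set.InjOn (invar r) 𝓕 := by
    intro P hP Q hQ hPQ
    by_contra hne
    refine hnonsim P hP Q hQ hne (sim_of_invar P Q ?_ hPQ)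
    rw [hnA]
    exact A_ncard hW P
  have himage : 𝓕.ncard = ((invar r) '' 𝓕).ncard := (Set.ncard_image_of_injOn hinj).symm
  -- the image lies in a small product set
  set 𝒟 : Set (Set V) := {D | v ∈ D ∧ D \ {v} ⊆ SR ∧ (D \ {v}).ncard ≤ r-2} with h𝒟
  have hsubI : (invar r) '' 𝓕 ⊆
      𝒟 ×ˢ ((Set.Iio (r+1)) ×ˢ (Set.univ : Set (Set (Sym2 (Fin r))))) := by
    rintro _ ⟨P, hP, rfl⟩
    obtain ⟨hvD, hmaxD⟩ := hmax P hP
    refine ⟨?_, ?_, trivial⟩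
    · show P.D ∈ 𝒟
      refine ⟨hvD, ?_, ?_⟩
      · intro u hu
        have huv : u < v := lt_of_le_of_ne (hmaxD u hu.1) (by simpa using hu.2)
        exact prefix_mem_RR hW P v hvD u hu.1 huv
      · have h1 := D_ncard hW P
        have h2 : (P.D \ {v}).ncard = P.D.ncard - 1 := by
          rw [Set.ncard_diff (by simpa using hvD) (Set.toFinite _)]
          simp
        omega
    · show nA P ∈ Set.Iio (r+1)
      simp only [Set.mem_Iio]
      have h3 := A_ncard hW P
      rw [hnA]
      omega
  -- counting the product set
  have hprodfin : (𝒟 ×ˢ ((Set.Iio (r+1)) ×ˢ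
      (Set.univ : Set (Set (Sym2 (Fin r)))))).Finite := by
    refine Set.Finite.prod (Set.toFinite _) (Set.Finite.prod (Set.finite_Iio _) (Set.toFinite _))
  have hcount : ((invar r) '' 𝓕).ncard ≤ 𝒟.ncard * ((r+1) * 2^(r*(r+1)/2)) := by
    refine le_trans (Set.ncard_le_ncard hsubI hprodfin) ?_
    rw [ncard_prod, ncard_prod]
    have hIio : (Set.Iio (r+1) : Set ℕ).ncard = r+1 := by
      rw [← Finset.coe_Iio, Set.ncard_coe_finset, Nat.card_Iio]
    have huniv : (Set.univ : Set (Set (Sym2 (Fin r)))).ncard = 2^(r*(r+1)/2) := by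
      rw [ncard_setsets, card_sym2_fin]
    rw [hIio, huniv]
  -- counting 𝒟
  have h𝒟count : 𝒟.ncard ≤ (r-1) * (SR.ncard + 1)^(r-2) := by
    set SRfin := (Set.toFinite SR).toFinset with hSRfin
    have hinj2 : Set.InjOn (fun D => (Set.toFinite (D \ {v})).toFinset) 𝒟 := by
      intro D hD D' hD' heq
      have hsets : D \ {v} = D' \ {v} := by
        have := congrArg (fun (s : Finset V) => (↑s : Set V)) heq
        simpa [Set.Finite.coe_toFinset] using this
      ext z
      constructor
      · intro hz
        rcases eq_or_ne z v with rfl | hzv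
        · exact hD'.1
        · have : z ∈ D' \ {v} := hsets ▸ ⟨hz, by simpa using hzv⟩
          exact this.1
      · intro hz
        rcases eq_or_ne z v with rfl | hzv
        · exact hD.1
        · have : z ∈ D \ {v} := hsets.symm ▸ ⟨hz, by simpa using hzv⟩
          exact this.1
    have himg : (fun D => (Set.toFinite (D \ {v})).toFinset) '' 𝒟 ⊆
        ↑(SRfin.powerset.filter (fun s => s.card ≤ r-2)) := by
      rintro _ ⟨D, hD, rfl⟩
      simp only [Finset.coe_filter, Set.mem_setOf_eq, Finset.mem_powerset]
      constructor
      · intro z hz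
        rw [Set.Finite.mem_toFinset] at hz
        rw [hSRfin, Set.Finite.mem_toFinset]
        exact hD.2.1 hz
      · rw [← Set.ncard_eq_toFinset_card (D \ {v}) (Set.toFinite _)]
        exact hD.2.2
    calc 𝒟.ncard = ((fun D => (Set.toFinite (D \ {v})).toFinset) '' 𝒟).ncard :=
          (Set.ncard_image_of_injOn hinj2).symm
      _ ≤ (↑(SRfin.powerset.filter (fun s => s.card ≤ r-2)) : Set (Finset V)).ncard :=
          Set.ncard_le_ncard himg (Finset.finite_toSet _)
      _ = (SRfin.powerset.filter (fun s => s.card ≤ r-2)).card := Set.ncard_coe_finset _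
      _ ≤ (r-2+1) * (SRfin.card + 1)^(r-2) := count_small_subsets _ _
      _ = (r-1) * (SR.ncard + 1)^(r-2) := by
          rw [hSRfin, ← Set.ncard_eq_toFinset_card SR (Set.toFinite _)]
          congr 1
          omega
  -- final combination
  rw [himage]
  refine le_trans hcount ?_
  refine le_trans (Nat.mul_le_mul_right _ h𝒟count) ?_
  have hmono : (SR.ncard + 1)^(r-2) ≤ (p*(r-1)*(p*(r-2))^(2*(r-2)) + 1)^(r-2) :=
    Nat.pow_le_pow_left (by omega) _
  refine le_trans (Nat.mul_le_mul_right _ (Nat.mul_le_mul_left _ hmono)) ?_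
  exact NUMFIN hp hr2
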